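/- Let λ > 1, α > 0, 0 < β < α, δ > 0, and set γ = √(α² − β²). If x ∈ ℝ satisfies (x/√(δ² + x²)) · K_{λ−3/2}(α√(δ² + x²)) / K_{λ−1/2}(α√(δ² + x²)) = β/α (the mode equation of the generalized hyperbolic distribution GH(λ, α, β, δ, 0)), then x < (β/γ²)·[λ − 1 + √((λ − 1)² + δ²γ²)]. Moreover the inequality is reversed if λ < 1, and equality holds (i.e. x equals the right-hand side) if λ = 1. -/

import Mathlib

open Real MeasureTheory Set Filter Topology Metric

/-- Modified Bessel function of the second kind. -/
noncomputable def besselK (ν x : ℝ) : ℝ :=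
  ∫ t in Set.Ioi (0:ℝ), Real.exp (-x * Real.cosh t) * Real.cosh (ν * t)


lemma one_add_sq_div_two_le_cosh (t : ℝ) : 1 + t ^ 2 / 2 ≤ Real.cosh t := by
  have h := Real.hasSum_cosh t
  have hnn : ∀ n : ℕ, 0 ≤ t ^ (2 * n) / (Nat.factorial (2 * n) : ℝ) := by
    intro n
    have h1 : 0 ≤ t ^ (2 * n) := by rw [pow_mul]; positivity
    positivity
  have key := sum_le_hasSum ({0, 1} : Finset ℕ) (fun n _ => hnn n) h
  have heq : (∑ n ∈ ({0, 1} : Finset ℕ), t ^ (2 * n) / (Nat.factorial (2 * n) : ℝ))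
      = 1 + t ^ 2 / 2 := by
    rw [Finset.sum_pair (by norm_num)]
    norm_num [Nat.factorial]
  linarith [heq ▸ key]

lemma cosh_le_exp_abs (t : ℝ) : Real.cosh t ≤ Real.exp |t| := by
  have h1 : Real.exp t ≤ Real.exp |t| := Real.exp_le_exp.2 (le_abs_self t)
  have h2 : Real.exp (-t) ≤ Real.exp |t| := Real.exp_le_exp.2 (neg_le_abs t)
  rw [Real.cosh_eq]; linarith

lemma integrable_gauss_lin (x c : ℝ) (hx : 0 < x) :
    Integrable (fun t : ℝ => Real.exp (-x * (1 + t ^ 2 / 2) + c * t)) := by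
  have h2 : (0:ℝ) < x / 2 := by linarith
  have shifted : Integrable (fun t : ℝ => Real.exp (-(x/2) * (t - c / x) ^ 2)) :=
    (integrable_exp_neg_mul_sq h2).comp_sub_right (c / x)
  apply (shifted.const_mul (Real.exp (-x + c ^ 2 / (2 * x)))).congr
    (Eventually.of_forall fun t => ?_)
  show Real.exp (-x + c ^ 2 / (2 * x)) * Real.exp (-(x/2) * (t - c / x) ^ 2) = _
  rw [← Real.exp_add]
  congr 1
  field_simp
  ring

/-- Master integrability bound. -/
lemma integrableOn_exp_cosh_lin (x c : ℝ) (hx : 0 < x) :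
    IntegrableOn (fun t : ℝ => Real.exp (-x * Real.cosh t + c * t)) (Set.Ioi 0) := by
  apply ((integrable_gauss_lin x c hx).integrableOn (s := Set.Ioi 0)).mono'
    (Continuous.aestronglyMeasurable (by continuity)) ?_
  filter_upwards with t
  rw [Real.norm_eq_abs, abs_of_nonneg (Real.exp_nonneg _)]
  apply Real.exp_le_exp.2
  have := one_add_sq_div_two_le_cosh t
  nlinarith

lemma abs_sinh_le_cosh (t : ℝ) : |Real.sinh t| ≤ Real.cosh t := by
  rw [abs_le, Real.sinh_eq, Real.cosh_eq]
  constructor <;> nlinarith [Real.exp_pos t, Real.exp_pos (-t)]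

lemma integrableOn_dom (x : ℝ) (hx : 0 < x) (f : ℝ → ℝ) (hf : Continuous f) (c : ℝ)
    (hb : ∀ t, 0 ≤ t → |f t| ≤ Real.exp (c * t)) :
    IntegrableOn (fun t => Real.exp (-x * Real.cosh t) * f t) (Set.Ioi 0) := by
  apply (integrableOn_exp_cosh_lin x c hx).mono'
    (Continuous.aestronglyMeasurable (by continuity))
  filter_upwards [ae_restrict_mem measurableSet_Ioi] with t ht
  rw [Real.norm_eq_abs, abs_mul, abs_of_nonneg (Real.exp_nonneg _), Real.exp_add]
  exact mul_le_mul_of_nonneg_left (hb t (le_of_lt ht)) (Real.exp_nonneg _)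

lemma cosh_mul_le (ν : ℝ) (t : ℝ) (ht : 0 ≤ t) : Real.cosh (ν * t) ≤ Real.exp (|ν| * t) :=
  calc Real.cosh (ν * t) ≤ Real.exp |ν * t| := cosh_le_exp_abs _
    _ = Real.exp (|ν| * t) := by rw [abs_mul, abs_of_nonneg ht]

lemma intK (ν x : ℝ) (hx : 0 < x) :
    IntegrableOn (fun t => Real.exp (-x * Real.cosh t) * Real.cosh (ν * t)) (Set.Ioi 0) :=
  integrableOn_dom x hx _ (by continuity) |ν| (fun t ht => by
    rw [abs_of_nonneg (Real.cosh_pos _).le]; exact cosh_mul_le ν t ht)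

lemma cosh_cosh_bound (ν t : ℝ) (ht : 0 ≤ t) :
    Real.cosh t * Real.cosh (ν * t) ≤ Real.exp ((|ν| + 1) * t) := by
  calc Real.cosh t * Real.cosh (ν * t) ≤ Real.exp t * Real.exp (|ν| * t) :=
        mul_le_mul (by simpa [abs_of_nonneg ht] using cosh_le_exp_abs t) (cosh_mul_le ν t ht)
          (Real.cosh_pos _).le (Real.exp_nonneg _)
    _ = Real.exp ((|ν| + 1) * t) := by rw [← Real.exp_add]; ring_nf

lemma intK_cosh (ν x : ℝ) (hx : 0 < x) :
    IntegrableOn (fun t => Real.cosh t * (Real.exp (-x * Real.cosh t) * Real.cosh (ν * t)))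
      (Set.Ioi 0) := by
  apply (integrableOn_dom x hx (fun t => Real.cosh t * Real.cosh (ν * t)) (by continuity)
    (|ν| + 1) ?_).congr (Eventually.of_forall fun t => by ring)
  intro t ht
  rw [abs_of_nonneg (mul_nonneg (Real.cosh_pos _).le (Real.cosh_pos _).le)]
  exact cosh_cosh_bound ν t ht

lemma intK_sinh (ν x : ℝ) (hx : 0 < x) :
    IntegrableOn (fun t => Real.sinh t * (Real.exp (-x * Real.cosh t) * Real.sinh (ν * t)))
      (Set.Ioi 0) := by
  apply (integrableOn_dom x hx (fun t => Real.sinh t * Real.sinh (ν * t)) (by continuity)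
    (|ν| + 1) ?_).congr (Eventually.of_forall fun t => by ring)
  intro t ht
  rw [abs_mul]
  calc |Real.sinh t| * |Real.sinh (ν * t)| ≤ Real.cosh t * Real.cosh (ν * t) :=
        mul_le_mul (abs_sinh_le_cosh t) (abs_sinh_le_cosh _) (abs_nonneg _) (Real.cosh_pos _).le
    _ ≤ Real.exp ((|ν| + 1) * t) := cosh_cosh_bound ν t ht

lemma besselK_pos (ν x : ℝ) (hx : 0 < x) : 0 < besselK ν x := by
  rw [besselK, setIntegral_pos_iff_support_of_nonneg_ae]
  · have hsub : Set.Ioi (0:ℝ) ⊆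
        Function.support fun t => Real.exp (-x * Real.cosh t) * Real.cosh (ν * t) := fun t _ =>
      mul_ne_zero (Real.exp_ne_zero _) (ne_of_gt (Real.cosh_pos _))
    calc (0:ENNReal) < volume (Set.Ioi (0:ℝ)) := by simp
      _ ≤ _ := measure_mono (Set.subset_inter hsub (subset_refl _))
  · filter_upwards with t
    exact mul_nonneg (Real.exp_nonneg _) (Real.cosh_pos _).le
  · exact intK ν x hx

lemma besselK_neg (ν x : ℝ) : besselK (-ν) x = besselK ν x := by
  unfold besselK
  congr 1
  ext t
  rw [show -ν * t = -(ν * t) by ring, Real.cosh_neg]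

lemma eventually_le_exp_neg (x ν : ℝ) (hx : 0 < x) :
    ∀ᶠ t in atTop, Real.exp (-x * Real.cosh t) * Real.cosh (ν * t) ≤ Real.exp (-t) := by
  filter_upwards [eventually_ge_atTop (max 0 (2 * (|ν| + 1) / x))] with t ht
  have ht0 : 0 ≤ t := le_trans (le_max_left _ _) ht
  have ht1 : 2 * (|ν| + 1) / x ≤ t := le_trans (le_max_right _ _) ht
  have ht2 : 2 * (|ν| + 1) ≤ x * t := by
    rw [div_le_iff₀ hx] at ht1; linarith
  calc Real.exp (-x * Real.cosh t) * Real.cosh (ν * t)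
      ≤ Real.exp (-x * (1 + t ^ 2 / 2)) * Real.exp (|ν| * t) := by
        apply mul_le_mul _ (cosh_mul_le ν t ht0) (Real.cosh_pos _).le (Real.exp_nonneg _)
        apply Real.exp_le_exp.2
        have := one_add_sq_div_two_le_cosh t
        nlinarith
    _ ≤ Real.exp (-t) := by
        rw [← Real.exp_add]
        apply Real.exp_le_exp.2
        nlinarith [abs_nonneg ν]

/-- The recurrence relation. -/
lemma besselK_recurrence (ν x : ℝ) (hx : 0 < x) :
    x * (besselK (ν + 1) x - besselK (ν - 1) x) = 2 * ν * besselK ν x := by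
  set H : ℝ → ℝ := fun t => -Real.exp (-x * Real.cosh t) * Real.sinh (ν * t) with hH
  set g : ℝ → ℝ := fun t =>
    x * (Real.sinh t * (Real.exp (-x * Real.cosh t) * Real.sinh (ν * t))) -
      ν * (Real.exp (-x * Real.cosh t) * Real.cosh (ν * t)) with hg
  have hderiv : ∀ t : ℝ, HasDerivAt H (g t) t := by
    intro t
    have h1 : HasDerivAt (fun t => -x * Real.cosh t) (-x * Real.sinh t) t :=
      (Real.hasDerivAt_cosh t).const_mul (-x)
    have h2 : HasDerivAt (fun t => Real.exp (-x * Real.cosh t))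
        (-x * Real.sinh t * Real.exp (-x * Real.cosh t)) t := by
      simpa [mul_comm] using h1.exp
    have h3 : HasDerivAt (fun t => Real.sinh (ν * t)) (ν * Real.cosh (ν * t)) t := by
      have h := ((hasDerivAt_id t).const_mul ν).sinh
      refine h.congr_deriv ?_
      show Real.cosh (ν * t) * (ν * 1) = _; ring
    have := (h2.neg.mul h3)
    refine this.congr_deriv ?_
    simp only [hg, Pi.neg_apply]
    ring
  have hint : IntegrableOn g (Set.Ioi 0) :=
    ((intK_sinh ν x hx).const_mul x).sub ((intK ν x hx).const_mul ν)
  have htend : Tendsto H atTop (𝓝 0) := by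
    apply squeeze_zero_norm' _ tendsto_exp_neg_atTop_nhds_zero
    filter_upwards [eventually_le_exp_neg x ν hx, eventually_ge_atTop (0:ℝ)] with t ht ht0
    rw [Real.norm_eq_abs, hH]
    calc |(-Real.exp (-x * Real.cosh t)) * Real.sinh (ν * t)|
        = Real.exp (-x * Real.cosh t) * |Real.sinh (ν * t)| := by
          rw [abs_mul, abs_neg, abs_of_nonneg (Real.exp_nonneg _)]
      _ ≤ Real.exp (-x * Real.cosh t) * Real.cosh (ν * t) :=
          mul_le_mul_of_nonneg_left (abs_sinh_le_cosh _) (Real.exp_nonneg _)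
      _ ≤ Real.exp (-t) := ht
  have key : ∫ t in Set.Ioi (0:ℝ), g t = 0 - H 0 :=
    integral_Ioi_of_hasDerivAt_of_tendsto (hderiv 0).continuousAt.continuousWithinAt
      (fun t _ => hderiv t) hint htend
  have hH0 : H 0 = 0 := by simp [hH]
  rw [hH0, sub_zero] at key
  have split : ∫ t in Set.Ioi (0:ℝ), g t =
      x * (∫ t in Set.Ioi (0:ℝ), Real.sinh t * (Real.exp (-x * Real.cosh t) * Real.sinh (ν * t))) -
      ν * besselK ν x := by
    rw [besselK, hg, integral_sub ((intK_sinh ν x hx).const_mul x) ((intK ν x hx).const_mul ν),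
      MeasureTheory.integral_const_mul, MeasureTheory.integral_const_mul]
  have hIs : (∫ t in Set.Ioi (0:ℝ), Real.sinh t * (Real.exp (-x * Real.cosh t) * Real.sinh (ν * t)))
      = (besselK (ν + 1) x - besselK ν x + (besselK ν x - besselK (ν - 1) x)) / 2 := by
    have hptwise : ∀ t : ℝ, Real.sinh t * (Real.exp (-x * Real.cosh t) * Real.sinh (ν * t)) =
        (Real.exp (-x * Real.cosh t) * Real.cosh ((ν + 1) * t) -
         Real.exp (-x * Real.cosh t) * Real.cosh ((ν - 1) * t)) / 2 := by
      intro t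
      rw [show (ν + 1) * t = ν * t + t by ring, show (ν - 1) * t = ν * t - t by ring,
        Real.cosh_add, Real.cosh_sub]
      ring
    rw [show (besselK (ν + 1) x - besselK ν x + (besselK ν x - besselK (ν - 1) x)) / 2
        = (besselK (ν + 1) x - besselK (ν - 1) x) / 2 by ring]
    rw [besselK, besselK, ← integral_sub (intK (ν+1) x hx) (intK (ν-1) x hx), ← integral_div]
    exact setIntegral_congr_fun measurableSet_Ioi (fun t _ => hptwise t)
  rw [split, hIs] at key
  linarith [key]

lemma besselK_hasDerivAt (ν x : ℝ) (hx : 0 < x) :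
    HasDerivAt (besselK ν) (-((besselK (ν - 1) x + besselK (ν + 1) x) / 2)) x := by
  have hε : (0:ℝ) < x / 2 := by linarith
  set F : ℝ → ℝ → ℝ := fun y t => Real.exp (-y * Real.cosh t) * Real.cosh (ν * t) with hF
  set F' : ℝ → ℝ → ℝ := fun y t => -(Real.cosh t * (Real.exp (-y * Real.cosh t) * Real.cosh (ν * t)))
    with hF'
  have hmain := hasDerivAt_integral_of_dominated_loc_of_deriv_le (F := F) (F' := F')
    (x₀ := x) (s := ball x (x / 2)) (μ := volume.restrict (Set.Ioi (0:ℝ)))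
    (bound := fun t => Real.cosh t * (Real.exp (-(x/2) * Real.cosh t) * Real.cosh (ν * t)))
    (ball_mem_nhds x hε)
    (Eventually.of_forall fun y => Continuous.aestronglyMeasurable (by fun_prop))
    (intK ν x hx)
    (Continuous.aestronglyMeasurable (by fun_prop))
    ?_ ((intK_cosh ν (x/2) hε))
    ?_
  · have h2 : (fun y => ∫ t in Set.Ioi (0:ℝ), F y t) = besselK ν := rfl
    rw [h2] at hmain
    refine hmain.2.congr_deriv ?_
    have hsplit : ∀ t : ℝ, F' x t =
        -(Real.exp (-x * Real.cosh t) * Real.cosh ((ν - 1) * t) / 2) +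
        -(Real.exp (-x * Real.cosh t) * Real.cosh ((ν + 1) * t) / 2) := by
      intro t
      simp only [hF']
      rw [show (ν + 1) * t = ν * t + t by ring, show (ν - 1) * t = ν * t - t by ring,
        Real.cosh_add, Real.cosh_sub]
      ring
    have i1 : IntegrableOn (fun t : ℝ =>
        -(Real.exp (-x * Real.cosh t) * Real.cosh ((ν - 1) * t) / 2)) (Set.Ioi 0) :=
      ((intK (ν-1) x hx).div_const 2).neg
    have i2 : IntegrableOn (fun t : ℝ =>
        -(Real.exp (-x * Real.cosh t) * Real.cosh ((ν + 1) * t) / 2)) (Set.Ioi 0) :=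
      ((intK (ν+1) x hx).div_const 2).neg
    rw [setIntegral_congr_fun measurableSet_Ioi (fun t _ => hsplit t),
      integral_add i1 i2,
      integral_neg, integral_neg, integral_div, integral_div]
    simp only [besselK]
    ring
  · filter_upwards [ae_restrict_mem measurableSet_Ioi] with t _
    intro y hy
    have hy2 : x / 2 < y := by
      rw [mem_ball, Real.dist_eq, abs_lt] at hy
      linarith
    simp only [hF', Real.norm_eq_abs, abs_neg]
    rw [abs_of_nonneg (by positivity)]
    have : Real.exp (-y * Real.cosh t) ≤ Real.exp (-(x/2) * Real.cosh t) := by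
      apply Real.exp_le_exp.2
      have := Real.cosh_pos t
      nlinarith
    exact mul_le_mul_of_nonneg_left
      (mul_le_mul_of_nonneg_right this (Real.cosh_pos _).le) (Real.cosh_pos _).le
  · filter_upwards [ae_restrict_mem measurableSet_Ioi] with t _
    intro y _
    have h1 : HasDerivAt (fun y => -y * Real.cosh t) (-Real.cosh t) y := by
      simpa using (hasDerivAt_id y).neg.mul_const (Real.cosh t)
    have h2 := (h1.exp).mul_const (Real.cosh (ν * t))
    refine h2.congr_deriv ?_
    simp only [hF']
    ring

lemma besselK_le_of_one_le (ν y : ℝ) (hy : 1 ≤ y) :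
    besselK ν y ≤ Real.exp (1 - y) * besselK ν 1 := by
  have h0 : (0:ℝ) < 1 := one_pos
  have hy0 : (0:ℝ) < y := lt_of_lt_of_le one_pos hy
  rw [besselK, besselK, ← integral_const_mul]
  apply setIntegral_mono_on (intK ν y hy0) (((intK ν 1 h0).const_mul _)) measurableSet_Ioi
  intro t _
  have h1 : Real.exp (-y * Real.cosh t) ≤ Real.exp (1 - y) * Real.exp (-1 * Real.cosh t) := by
    rw [← Real.exp_add]
    apply Real.exp_le_exp.2
    nlinarith [Real.one_le_cosh t]
  calc Real.exp (-y * Real.cosh t) * Real.cosh (ν * t)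
      ≤ (Real.exp (1 - y) * Real.exp (-1 * Real.cosh t)) * Real.cosh (ν * t) :=
        mul_le_mul_of_nonneg_right h1 (Real.cosh_pos _).le
    _ = Real.exp (1 - y) * (Real.exp (-1 * Real.cosh t) * Real.cosh (ν * t)) := by ring

set_option maxHeartbeats 1000000 in
lemma keyIneq (μ y : ℝ) (hμ : 0 < μ) (hy : 0 < y) :
    y * ((besselK (μ + 1/2) y) ^ 2 - (besselK (μ - 1/2) y) ^ 2) <
      2 * μ * (besselK (μ + 1/2) y * besselK (μ - 1/2) y) := by
  set a : ℝ := μ + 1/2 with ha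
  set b : ℝ := μ - 1/2 with hb
  set D : ℝ → ℝ := fun z =>
    2 * μ * (besselK a z * besselK b z) - z * (besselK a z) ^ 2 + z * (besselK b z) ^ 2 with hD
  -- derivative of D
  have hDderiv : ∀ z : ℝ, 0 < z →
      HasDerivAt D (-(2 * μ / z) * (besselK a z * besselK b z)) z := by
    intro z hz
    have hA := besselK_hasDerivAt a z hz
    have hB := besselK_hasDerivAt b z hz
    set A' : ℝ := -((besselK (a - 1) z + besselK (a + 1) z) / 2) with hA'
    set B' : ℝ := -((besselK (b - 1) z + besselK (b + 1) z) / 2) with hB'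
    have hid : HasDerivAt (fun z : ℝ => z) 1 z := hasDerivAt_id z
    have h1 : HasDerivAt D
        (2 * μ * (A' * besselK b z + besselK a z * B') -
          (1 * (besselK a z) ^ 2 + z * (2 * besselK a z * A')) +
          (1 * (besselK b z) ^ 2 + z * (2 * besselK b z * B'))) z := by
      apply HasDerivAt.add
      apply HasDerivAt.sub
      · exact (hA.mul hB).const_mul (2 * μ)
      · have := hid.mul (hA.pow 2)
        refine this.congr_deriv ?_
        simp only [Pi.pow_apply]
        ring
      · have := hid.mul (hB.pow 2)
        refine this.congr_deriv ?_
        simp only [Pi.pow_apply]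
        ring
    convert h1 using 1
    have rec_a := besselK_recurrence a z hz
    have rec_b := besselK_recurrence b z hz
    have hab1 : a - 1 = b := by rw [ha, hb]; ring
    have hba1 : b + 1 = a := by rw [ha, hb]; ring
    rw [hab1] at hA'
    rw [hba1] at hB'
    rw [hab1] at rec_a
    rw [hba1] at rec_b
    rw [hA', hB']
    rw [show -(2*μ/z) * (besselK a z * besselK b z)
        = (-(2*μ) * (besselK a z * besselK b z))/z by field_simp]
    rw [div_eq_iff (ne_of_gt hz)]
    linear_combination (μ*besselK b z - z*besselK a z) * rec_a
      - 2*besselK a z*(z*besselK a z - μ*besselK b z) * ha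
      - (z*besselK b z + μ*besselK a z) * rec_b
      - 2*besselK b z*(z*besselK b z + μ*besselK a z) * hb
  -- strict antitonicity
  have hanti : StrictAntiOn D (Set.Ioi 0) := by
    apply strictAntiOn_of_deriv_neg (convex_Ioi 0)
      (fun z hz => ((hDderiv z hz).continuousAt).continuousWithinAt)
    intro z hz
    rw [interior_Ioi] at hz
    rw [(hDderiv z hz).deriv]
    have h1 := besselK_pos a z hz
    have h2 := besselK_pos b z hz
    have h3 : (0:ℝ) < 2 * μ / z := div_pos (by linarith) hz
    exact mul_neg_of_neg_of_pos (by linarith) (mul_pos h1 h2)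
  -- tendsto 0 at infinity
  have htend : Tendsto D atTop (𝓝 0) := by
    set Ca := besselK a 1 with hCa
    set Cb := besselK b 1 with hCb
    have hCa0 : 0 < Ca := besselK_pos a 1 one_pos
    have hCb0 : 0 < Cb := besselK_pos b 1 one_pos
    set C : ℝ := 2 * μ * (Ca * Cb) + Ca ^ 2 + Cb ^ 2 with hC
    have hC0 : 0 < C := by positivity
    have hg : Tendsto (fun z : ℝ => C * ((z + 1) * Real.exp (1 - z) ^ 2)) atTop (𝓝 0) := by
      have l1 : Tendsto (fun z : ℝ => 2 * z) atTop atTop :=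
        Tendsto.const_mul_atTop two_pos tendsto_id
      have l2 := (tendsto_pow_mul_exp_neg_atTop_nhds_zero 1).comp l1
      have l3 := tendsto_exp_neg_atTop_nhds_zero.comp l1
      have l4 : Tendsto (fun z : ℝ =>
          C * Real.exp 2 * ((1/2) * ((2*z) ^ 1 * Real.exp (-(2*z))) + Real.exp (-(2*z))))
          atTop (𝓝 (C * Real.exp 2 * ((1/2) * 0 + 0))) :=
        (((l2.const_mul (1/2:ℝ)).add l3).const_mul (C * Real.exp 2))
      simp only [mul_zero, zero_add, add_zero] at l4
      apply l4.congr
      intro z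
      rw [show Real.exp (1 - z) ^ 2 = Real.exp 2 * Real.exp (-(2*z)) by
        rw [sq, ← Real.exp_add, ← Real.exp_add]; congr 1; ring]
      ring
    apply squeeze_zero_norm' _ hg
    filter_upwards [eventually_ge_atTop (1:ℝ)] with z hz1
    have hz0 : (0:ℝ) < z := lt_of_lt_of_le one_pos hz1
    set E := Real.exp (1 - z) with hE
    have hE0 : 0 < E := Real.exp_pos _
    have ka := besselK_le_of_one_le a z hz1
    have kb := besselK_le_of_one_le b z hz1
    have ka0 := (besselK_pos a z hz0).le
    have kb0 := (besselK_pos b z hz0).le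
    have t1 : besselK a z * besselK b z ≤ (E * Ca) * (E * Cb) :=
      mul_le_mul ka kb kb0 (by positivity)
    have t2 : (besselK a z) ^ 2 ≤ (E * Ca) ^ 2 := by nlinarith
    have t3 : (besselK b z) ^ 2 ≤ (E * Cb) ^ 2 := by nlinarith
    rw [Real.norm_eq_abs, abs_le]
    have hCa2 : (0:ℝ) ≤ C - Ca^2 := by nlinarith [mul_pos hCa0 hCb0]
    have hCb2 : (0:ℝ) ≤ C - Cb^2 := by nlinarith [mul_pos hCa0 hCb0]
    have u1 : 2*μ*(besselK a z * besselK b z) ≤ 2*μ*(E*Ca*(E*Cb)) :=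
      mul_le_mul_of_nonneg_left t1 (by linarith)
    have u2 : z*(besselK b z)^2 ≤ z*(E*Cb)^2 := mul_le_mul_of_nonneg_left t3 hz0.le
    have u3 : (0:ℝ) ≤ z*(besselK a z)^2 := mul_nonneg hz0.le (sq_nonneg _)
    have u4 : 2*μ*(E*Ca*(E*Cb)) + z*(E*Cb)^2 ≤ C*((z+1)*E^2) := by
      nlinarith [mul_nonneg (mul_nonneg hz0.le hCb2) (sq_nonneg E),
        mul_nonneg (add_nonneg (sq_nonneg Ca) (sq_nonneg Cb)) (sq_nonneg E)]
    have l1 : z*(besselK a z)^2 ≤ z*(E*Ca)^2 := mul_le_mul_of_nonneg_left t2 hz0.le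
    have l2 : (0:ℝ) ≤ 2*μ*(besselK a z*besselK b z) :=
      mul_nonneg (by linarith) (mul_nonneg ka0 kb0)
    have l3 : (0:ℝ) ≤ z*(besselK b z)^2 := mul_nonneg hz0.le (sq_nonneg _)
    have l4 : z*(E*Ca)^2 ≤ C*((z+1)*E^2) := by
      nlinarith [mul_nonneg (mul_nonneg hz0.le hCa2) (sq_nonneg E),
        mul_nonneg hC0.le (sq_nonneg E)]
    constructor
    · simp only [hD]; linarith
    · simp only [hD]; linarith
  -- conclusion
  have hpos : 0 < D y := by
    have h1 : D (y + 1) < D y := hanti (mem_Ioi.2 hy) (mem_Ioi.2 (by linarith)) (by linarith)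
    have h2 : 0 ≤ D (y + 1) := by
      apply le_of_tendsto htend
      filter_upwards [eventually_ge_atTop (y + 2)] with u hu
      exact (hanti (mem_Ioi.2 (by linarith)) (mem_Ioi.2 (by linarith)) (by linarith)).le
    linarith
  simp only [hD] at hpos
  linarith

set_option maxHeartbeats 1000000 in
theorem stmt_2 (lam α β δ γ : ℝ) (hα : 0 < α) (hβ : 0 < β) (hβα : β < α) (hδ : 0 < δ)
    (hγ : γ = Real.sqrt (α ^ 2 - β ^ 2)) (x : ℝ)
    (hx : x / Real.sqrt (δ ^ 2 + x ^ 2) *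
        (besselK (lam - 3 / 2) (α * Real.sqrt (δ ^ 2 + x ^ 2)) /
          besselK (lam - 1 / 2) (α * Real.sqrt (δ ^ 2 + x ^ 2))) = β / α) :
    (1 < lam → x < β / γ ^ 2 * (lam - 1 + Real.sqrt ((lam - 1) ^ 2 + δ ^ 2 * γ ^ 2))) ∧
    (lam < 1 → x > β / γ ^ 2 * (lam - 1 + Real.sqrt ((lam - 1) ^ 2 + δ ^ 2 * γ ^ 2))) ∧
    (lam = 1 → x = β / γ ^ 2 * (lam - 1 + Real.sqrt ((lam - 1) ^ 2 + δ ^ 2 * γ ^ 2))) := by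
  have hγ2 : γ ^ 2 = α ^ 2 - β ^ 2 := by
    rw [hγ, Real.sq_sqrt (by nlinarith)]
  have hγ0 : 0 < γ := by
    rw [hγ]; exact Real.sqrt_pos.2 (by nlinarith)
  set s : ℝ := Real.sqrt (δ ^ 2 + x ^ 2) with hs
  have hs0 : 0 < s := Real.sqrt_pos.2 (by positivity)
  have hs2 : s ^ 2 = δ ^ 2 + x ^ 2 := Real.sq_sqrt (by positivity)
  set y : ℝ := α * s with hy
  have hy0 : 0 < y := mul_pos hα hs0
  set Kb : ℝ := besselK (lam - 3/2) y with hKbd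
  set Ka : ℝ := besselK (lam - 1/2) y with hKad
  have hKb : 0 < Kb := besselK_pos _ _ hy0
  have hKa : 0 < Ka := besselK_pos _ _ hy0
  have hxx : x * Kb * α = β * (s * Ka) := by
    rw [div_mul_div_comm, div_eq_div_iff (by positivity) (by positivity)] at hx
    exact hx
  have hx0 : 0 < x := by
    nlinarith only [hxx, mul_pos (mul_pos hβ hs0) hKa, mul_pos hα hKb]
  have hyx : α ^ 2 * (δ ^ 2 + x ^ 2) = y ^ 2 := by
    rw [hy, ← hs2]; ring
  -- the mode value M
  set S : ℝ := Real.sqrt ((lam - 1) ^ 2 + δ ^ 2 * γ ^ 2) with hSd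
  have hS2 : S ^ 2 = (lam - 1) ^ 2 + δ ^ 2 * γ ^ 2 := Real.sq_sqrt (by positivity)
  have hS0 : 0 ≤ S := Real.sqrt_nonneg _
  have hSabs : |lam - 1| < S := by
    rw [← Real.sqrt_sq_eq_abs]
    apply Real.sqrt_lt_sqrt (sq_nonneg _)
    nlinarith [mul_pos (mul_pos hδ hδ) (mul_pos hγ0 hγ0)]
  have hSgt : -(lam - 1) < S := lt_of_le_of_lt (neg_le_abs _) hSabs
  have hSgt' : lam - 1 < S := lt_of_le_of_lt (le_abs_self _) hSabs
  set M : ℝ := β / γ ^ 2 * (lam - 1 + S) with hMd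
  have hM0 : 0 < M := by
    apply mul_pos (by positivity)
    linarith
  have hMγ : γ ^ 2 * M = β * (lam - 1 + S) := by
    rw [hMd]; field_simp
  have hquad : γ ^ 2 * M ^ 2 - 2 * β * (lam - 1) * M - β ^ 2 * δ ^ 2 = 0 := by
    have h2 : γ ^ 2 * (γ ^ 2 * M ^ 2 - 2 * β * (lam - 1) * M - β ^ 2 * δ ^ 2) = 0 := by
      linear_combination (γ ^ 2 * M + β * (lam - 1 + S) - 2 * β * (lam - 1)) * hMγ +
        β ^ 2 * hS2
    have := mul_eq_zero.1 h2
    rcases this with h | h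
    · exact absurd h (by positivity)
    · exact h
  have hc0 : 0 ≤ α ^ 2 * M - β * (lam - 1) := by
    have key : γ ^ 2 * (α ^ 2 * M - β * (lam - 1)) =
        β * (β ^ 2 * (lam - 1 + S) + γ ^ 2 * S) := by
      linear_combination α ^ 2 * hMγ - β * (lam - 1 + S) * hγ2
    have h9 : 0 ≤ γ ^ 2 * (α ^ 2 * M - β * (lam - 1)) := by
      rw [key]
      exact mul_nonneg hβ.le (add_nonneg
        (mul_nonneg (sq_nonneg β) (by linarith : (0:ℝ) ≤ lam - 1 + S))
        (mul_nonneg (sq_nonneg γ) hS0))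
    exact (mul_nonneg_iff_of_pos_left (by positivity : (0:ℝ) < γ ^ 2)).1 h9
  have keyeq : (lam - 1) ^ 2 + α ^ 2 * (δ ^ 2 + M ^ 2) =
      ((α ^ 2 * M - β * (lam - 1)) / β) ^ 2 := by
    rw [div_pow, eq_comm, div_eq_iff (by positivity : (β:ℝ)^2 ≠ 0), eq_comm]
    linear_combination -α ^ 2 * hquad + α ^ 2 * M ^ 2 * hγ2
  set sb : ℝ := Real.sqrt ((lam - 1) ^ 2 + α ^ 2 * (δ ^ 2 + M ^ 2)) with hsbd
  have hsb0 : 0 ≤ sb := Real.sqrt_nonneg _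
  have hfix : β * sb = α ^ 2 * M - β * (lam - 1) := by
    rw [hsbd, keyeq, Real.sqrt_sq (div_nonneg hc0 hβ.le)]
    field_simp
  set T : ℝ := Real.sqrt ((lam - 1) ^ 2 + y ^ 2) with hTd
  have hT2 : T ^ 2 = (lam - 1) ^ 2 + y ^ 2 := Real.sq_sqrt (by positivity)
  have hT0 : 0 ≤ T := Real.sqrt_nonneg _
  set sa : ℝ := Real.sqrt ((lam - 1) ^ 2 + α ^ 2 * (δ ^ 2 + x ^ 2)) with hsad
  have hsaT : sa = T := by rw [hsad, hTd, hyx]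
  have hsa2 : sa ^ 2 = (lam - 1) ^ 2 + α ^ 2 * (δ ^ 2 + x ^ 2) := Real.sq_sqrt (by positivity)
  have hsa0 : 0 ≤ sa := Real.sqrt_nonneg _
  have hsb2 : sb ^ 2 = (lam - 1) ^ 2 + α ^ 2 * (δ ^ 2 + M ^ 2) := Real.sq_sqrt (by positivity)
  have hsax : α * x ≤ sa := by
    rw [hsad]
    rw [show α * x = Real.sqrt ((α * x) ^ 2) from (Real.sqrt_sq (by positivity)).symm]
    apply Real.sqrt_le_sqrt
    nlinarith only [sq_nonneg (lam - 1), sq_nonneg (α * δ)]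
  have hsbM : α * M ≤ sb := by
    rw [hsbd]
    rw [show α * M = Real.sqrt ((α * M) ^ 2) from (Real.sqrt_sq (by positivity)).symm]
    apply Real.sqrt_le_sqrt
    nlinarith only [sq_nonneg (lam - 1), sq_nonneg (α * δ)]
  have hxx2 : α ^ 2 * (x * Kb) = β * (y * Ka) := by
    rw [hy]; linear_combination α * hxx
  have hprod : (sa - sb) * (sa + sb) = α ^ 2 * (x ^ 2 - M ^ 2) := by
    linear_combination hsa2 - hsb2
  have hsum : α * (x + M) ≤ sa + sb := by linarith
  have hsumpos : 0 < sa + sb :=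
    lt_of_lt_of_le (by positivity : (0:ℝ) < α * (x + M)) hsum
  refine ⟨?_, ?_, ?_⟩
  · -- case 1 < lam
    intro hlam
    have hμ0 : 0 < lam - 1 := by linarith
    have key := keyIneq (lam - 1) y hμ0 hy0
    rw [show lam - 1 + 1/2 = lam - 1/2 by ring, show lam - 1 - 1/2 = lam - 3/2 by ring,
      ← hKad, ← hKbd] at key
    have step1 : y * Ka < (lam - 1 + T) * Kb := by
      by_contra hcon
      push_neg at hcon
      have h1 : 0 ≤ y * Ka - (lam - 1) * Kb - T * Kb := by nlinarith only [hcon]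
      have h1b : 0 ≤ y * Ka - (lam - 1) * Kb + T * Kb := by
        nlinarith only [h1, mul_nonneg hT0 hKb.le]
      have h2 : (T * Kb) ^ 2 ≤ (y * Ka - (lam - 1) * Kb) ^ 2 := by
        nlinarith only [mul_nonneg h1 h1b]
      have hTK : T ^ 2 * Kb ^ 2 = ((lam - 1) ^ 2 + y ^ 2) * Kb ^ 2 := by rw [hT2]
      have keyy := mul_lt_mul_of_pos_left key hy0
      nlinarith only [keyy, h2, hTK]
    have step2 : α ^ 2 * x < β * (lam - 1 + sa) := by
      rw [hsaT]
      by_contra hcon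
      push_neg at hcon
      have A := mul_le_mul_of_nonneg_right hcon hKb.le
      have B := mul_lt_mul_of_pos_left step1 hβ
      nlinarith only [A, B, hxx2]
    show x < M
    by_contra hcon
    push_neg at hcon
    have P := mul_nonneg (mul_nonneg hα.le (sub_nonneg.2 hcon)) (sub_nonneg.2 hsum)
    have h6 : 0 ≤ (sa + sb) * (α * (x - M) - (sa - sb)) := by
      nlinarith only [P, hprod]
    have hdiff : sa - sb ≤ α * (x - M) := by
      by_contra hd
      push_neg at hd
      have := mul_neg_of_pos_of_neg hsumpos (by linarith only [hd] :
        α * (x - M) - (sa - sb) < 0)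
      linarith only [this, h6]
    have hfin1 := mul_le_mul_of_nonneg_left hdiff hβ.le
    have hfin2 := mul_le_mul_of_nonneg_right hβα.le (mul_nonneg hα.le (sub_nonneg.2 hcon))
    nlinarith only [step2, hfix, hfin1, hfin2]
  · -- case lam < 1
    intro hlam
    have hμ0 : 0 < 1 - lam := by linarith
    have key := keyIneq (1 - lam) y hμ0 hy0
    rw [show 1 - lam + 1/2 = -(lam - 3/2) by ring, show 1 - lam - 1/2 = -(lam - 1/2) by ring,
      besselK_neg, besselK_neg, ← hKad, ← hKbd] at key
    have step1 : (lam - 1 + T) * Kb < y * Ka := by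
      by_contra hcon
      push_neg at hcon
      have h1 : 0 < y * Ka - (lam - 1) * Kb := by
        nlinarith only [mul_pos hy0 hKa, mul_pos hμ0 hKb]
      have h1b : 0 ≤ T * Kb - (y * Ka - (lam - 1) * Kb) := by nlinarith only [hcon]
      have h2 : (y * Ka - (lam - 1) * Kb) ^ 2 ≤ (T * Kb) ^ 2 := by
        nlinarith only [mul_nonneg h1b (by linarith only [h1, h1b] :
          (0:ℝ) ≤ T * Kb + (y * Ka - (lam - 1) * Kb))]
      have hTK : T ^ 2 * Kb ^ 2 = ((lam - 1) ^ 2 + y ^ 2) * Kb ^ 2 := by rw [hT2]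
      have keyy := mul_lt_mul_of_pos_left key hy0
      nlinarith only [keyy, h2, hTK]
    have step2 : β * (lam - 1 + sa) < α ^ 2 * x := by
      rw [hsaT]
      by_contra hcon
      push_neg at hcon
      have A := mul_le_mul_of_nonneg_right hcon hKb.le
      have B := mul_lt_mul_of_pos_left step1 hβ
      nlinarith only [A, B, hxx2]
    show x > M
    by_contra hcon
    push_neg at hcon
    have P := mul_nonneg (mul_nonneg hα.le (sub_nonneg.2 hcon)) (sub_nonneg.2 hsum)
    have h6 : 0 ≤ (sa + sb) * (α * (M - x) - (sb - sa)) := by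
      nlinarith only [P, hprod]
    have hdiff : sb - sa ≤ α * (M - x) := by
      by_contra hd
      push_neg at hd
      have := mul_neg_of_pos_of_neg hsumpos (by linarith only [hd] :
        α * (M - x) - (sb - sa) < 0)
      linarith only [this, h6]
    have hfin1 := mul_le_mul_of_nonneg_left hdiff hβ.le
    have hfin2 := mul_le_mul_of_nonneg_right hβα.le (mul_nonneg hα.le (sub_nonneg.2 hcon))
    nlinarith only [step2, hfix, hfin1, hfin2]
  · -- case lam = 1
    intro hlam
    subst hlam
    have hKba : Kb = Ka := by
      rw [hKbd, hKad, show (1:ℝ) - 3/2 = -(1 - 1/2) by norm_num, besselK_neg]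
    have hxα : x * α = β * s := by
      have : (x * α) * Ka = (β * s) * Ka := by
        rw [hKba] at hxx; linear_combination hxx
      exact mul_right_cancel₀ (ne_of_gt hKa) this
    have hq : γ ^ 2 * x ^ 2 = β ^ 2 * δ ^ 2 := by
      linear_combination x ^ 2 * hγ2 + (x * α + β * s) * hxα + β ^ 2 * hs2
    have goal2 : x = β * δ / γ := by
      have hsq : x ^ 2 = (β * δ / γ) ^ 2 := by
        field_simp
        linear_combination hq
      rw [show x = Real.sqrt (x ^ 2) from (Real.sqrt_sq hx0.le).symm, hsq,
        Real.sqrt_sq (by positivity)]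
    show x = M
    rw [hMd, hSd, show ((1:ℝ) - 1) ^ 2 + δ ^ 2 * γ ^ 2 = (δ * γ) ^ 2 by ring,
      Real.sqrt_sq (by positivity), goal2]
    field_simp
    ring
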